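/- If U(λ) is a continuous function on (σ, τ) with values in the unitary complex 2n × 2n matrices such that rank(U(λ) − 1) is constant on (σ, τ), then the matrix-function A(λ) := (1/2π) ∮_Γ ((z+1)/(z−1)) (U(λ) − z)⁻¹ dz, where Γ is a positively oriented contour whose interior does not contain the point 1 but contains all eigenvalues of U(λ) different from 1, is continuous on (σ, τ). -/

import Mathlib

open MeasureTheory Set Filter Topology intervalIntegral

/-- The bilinear pairing `⟨Y, Z⟩ = ∑ i, Y i * conj (Z i)` on `ℂ^N` (linear in the first
argument, conjugate-linear in the second). -/
noncomputable def cInner {N : ℕ} (Y Z : Fin N → ℂ) : ℂ := ∑ i, Y i * (starRingEnd ℂ) (Z i)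

/-- `A = (1/2π) ∮_Γ ((z+1)/(z−1)) (U − z)⁻¹ dz`, where `Γ` is a positively oriented contour
whose interior does not contain `1` but contains all eigenvalues of the unitary matrix `U`
different from `1`.  Equivalently (holomorphic functional calculus / Riesz projections):
`A` vanishes on `ker (U − 1)` and `A (U − 1) x = −i (U + 1) x` for `x ⊥ ker (U − 1)`. -/
def IsCayleyBoundaryMatrix {N : ℕ} (U A : Matrix (Fin N) (Fin N) ℂ) : Prop :=
  (∀ v : Fin N → ℂ, U.mulVec v = v → A.mulVec v = 0) ∧
  (∀ x : Fin N → ℂ, (∀ v : Fin N → ℂ, U.mulVec v = v → cInner x v = 0) →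
    A.mulVec ((U - 1).mulVec x) = (-Complex.I) • (U + 1).mulVec x)


namespace CayleyAux

open Matrix ComplexConjugate Submodule

variable {N : ℕ}

local notation "E" => EuclideanSpace ℂ (Fin N)
local notation "eqE" => WithLp.equiv 2 (Fin N → ℂ)

lemma tE_apply' (M : Matrix (Fin N) (Fin N) ℂ) (v : EuclideanSpace ℂ (Fin N)) :
    Matrix.toEuclideanLin M v = (eqE).symm (M.mulVec (eqE v)) := rfl

/-- kernel of `U - 1` as a subspace of Euclidean space -/
noncomputable def Ksub (U : Matrix (Fin N) (Fin N) ℂ) : Submodule ℂ (EuclideanSpace ℂ (Fin N)) :=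
  LinearMap.ker (Matrix.toEuclideanLin (U - 1))

lemma mem_Ksub {U : Matrix (Fin N) (Fin N) ℂ} {v : EuclideanSpace ℂ (Fin N)} :
    v ∈ Ksub U ↔ U.mulVec (eqE v) = eqE v := by
  simp only [Ksub, LinearMap.mem_ker, Matrix.toEuclideanLin_apply, Matrix.sub_mulVec,
    Matrix.one_mulVec]
  rw [show (0 : EuclideanSpace ℂ (Fin N)) = (WithLp.equiv 2 (Fin N → ℂ)).symm 0 from rfl]
  rw [WithLp.equiv_symm_apply, (WithLp.toLp_injective 2).eq_iff, sub_eq_zero]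
  rfl

lemma star_fix {U : Matrix (Fin N) (Fin N) ℂ} (hU : U ∈ Matrix.unitaryGroup (Fin N) ℂ)
    {v : Fin N → ℂ} (hv : U.mulVec v = v) : Uᴴ.mulVec v = v := by
  have h1 : Uᴴ * U = 1 := by
    have := Matrix.mem_unitaryGroup_iff'.mp hU
    rwa [Matrix.star_eq_conjTranspose] at this
  calc Uᴴ.mulVec v = Uᴴ.mulVec (U.mulVec v) := by rw [hv]
    _ = (Uᴴ * U).mulVec v := Matrix.mulVec_mulVec v Uᴴ U
    _ = v := by rw [h1, Matrix.one_mulVec]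

lemma inner_conjTranspose (M : Matrix (Fin N) (Fin N) ℂ) (v : EuclideanSpace ℂ (Fin N))
    (x : Fin N → ℂ) :
    (inner ℂ v ((eqE).symm (M.mulVec x)) : ℂ)
      = inner ℂ ((eqE).symm (Mᴴ.mulVec (eqE v))) ((eqE).symm x) := by
  simp only [PiLp.inner_apply, RCLike.inner_apply, WithLp.equiv_symm_apply,
    WithLp.equiv_apply, Matrix.mulVec, dotProduct, Matrix.conjTranspose_apply,
    map_sum, _root_.map_mul, RingHomCompTriple.comp_apply, Finset.mul_sum, Finset.sum_mul]
  rw [Finset.sum_comm]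
  refine Finset.sum_congr rfl fun a _ => Finset.sum_congr rfl fun b _ => ?_
  simp only [RCLike.star_def, Complex.conj_conj]
  ring

lemma range_le_orth {U : Matrix (Fin N) (Fin N) ℂ} (hU : U ∈ Matrix.unitaryGroup (Fin N) ℂ) :
    LinearMap.range (Matrix.toEuclideanLin (U - 1)) ≤ (Ksub U)ᗮ := by
  rintro y ⟨x, rfl⟩
  rw [Submodule.mem_orthogonal]
  intro u hu
  rw [tE_apply', inner_conjTranspose]
  have h0 : (U - 1)ᴴ.mulVec (eqE u) = 0 := by
    rw [Matrix.conjTranspose_sub, Matrix.conjTranspose_one, Matrix.sub_mulVec,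
      Matrix.one_mulVec, star_fix hU (mem_Ksub.mp hu), sub_self]
  rw [h0]
  simp

lemma finrank_Ksub_add_rank (U : Matrix (Fin N) (Fin N) ℂ) :
    Module.finrank ℂ (Ksub U) + (U - 1).rank = N := by
  have h := LinearMap.finrank_range_add_finrank_ker (Matrix.toEuclideanLin (U - 1))
  rw [finrank_euclideanSpace_fin] at h
  have hr : (U - 1).rank = Module.finrank ℂ (LinearMap.range (Matrix.toEuclideanLin (U - 1))) := by
    rw [Matrix.rank_eq_finrank_range_toLin (U - 1) (PiLp.basisFun 2 ℂ (Fin N))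
      (PiLp.basisFun 2 ℂ (Fin N)), Matrix.toEuclideanLin_eq_toLin]
  rw [Ksub]
  omega

lemma finrank_orth (U : Matrix (Fin N) (Fin N) ℂ) :
    Module.finrank ℂ ((Ksub U)ᗮ) = (U - 1).rank := by
  have h := Submodule.finrank_add_finrank_orthogonal (K := Ksub U)
  rw [finrank_euclideanSpace_fin] at h
  have h2 := finrank_Ksub_add_rank U
  omega

lemma range_eq_orth {U : Matrix (Fin N) (Fin N) ℂ} (hU : U ∈ Matrix.unitaryGroup (Fin N) ℂ) :
    LinearMap.range (Matrix.toEuclideanLin (U - 1)) = (Ksub U)ᗮ := by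
  apply Submodule.eq_of_le_of_finrank_eq (range_le_orth hU)
  rw [finrank_orth]
  have h := LinearMap.finrank_range_add_finrank_ker (Matrix.toEuclideanLin (U - 1))
  rw [finrank_euclideanSpace_fin] at h
  have h2 := finrank_Ksub_add_rank U
  rw [Ksub] at h2
  omega

lemma exists_preimage_orth {U : Matrix (Fin N) (Fin N) ℂ}
    (hU : U ∈ Matrix.unitaryGroup (Fin N) ℂ) {y : EuclideanSpace ℂ (Fin N)}
    (hy : y ∈ (Ksub U)ᗮ) :
    ∃ x : EuclideanSpace ℂ (Fin N), x ∈ (Ksub U)ᗮ ∧ Matrix.toEuclideanLin (U - 1) x = y := by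
  have hmap : Submodule.map (Matrix.toEuclideanLin (U - 1)) ((Ksub U)ᗮ) = (Ksub U)ᗮ := by
    have hle : Submodule.map (Matrix.toEuclideanLin (U - 1)) ((Ksub U)ᗮ) ≤ (Ksub U)ᗮ :=
      le_trans (LinearMap.map_le_range) (range_le_orth hU)
    apply Submodule.eq_of_le_of_finrank_eq hle
    have hinj : Function.Injective
        ((Matrix.toEuclideanLin (U - 1)).domRestrict ((Ksub U)ᗮ)) := by
      rw [← LinearMap.ker_eq_bot, LinearMap.ker_eq_bot']
      rintro ⟨x, hx⟩ hx0
      have hxk : x ∈ Ksub U := by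
        exact hx0
      have : x = 0 := by
        have := (Submodule.orthogonal_disjoint (Ksub U)).le_bot ⟨hxk, hx⟩
        simpa using this
      simp [this]
    have := LinearMap.finrank_range_of_inj hinj
    rw [LinearMap.range_domRestrict] at this
    exact this
  rw [← hmap] at hy
  exact Submodule.mem_map.mp hy

lemma decomp {U : Matrix (Fin N) (Fin N) ℂ} (hU : U ∈ Matrix.unitaryGroup (Fin N) ℂ)
    (w : EuclideanSpace ℂ (Fin N)) :
    ∃ v x : EuclideanSpace ℂ (Fin N), v ∈ Ksub U ∧ x ∈ (Ksub U)ᗮ ∧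
      w = v + Matrix.toEuclideanLin (U - 1) x := by
  have h1 : ((orthogonalProjection (Ksub U) w : Ksub U) : EuclideanSpace ℂ (Fin N)) ∈ Ksub U :=
    (orthogonalProjection (Ksub U) w).2
  have h2 : w - orthogonalProjection (Ksub U) w ∈ (Ksub U)ᗮ :=
    sub_starProjection_mem_orthogonal w
  obtain ⟨x, hx, hxy⟩ := exists_preimage_orth hU h2
  exact ⟨_, x, h1, hx, by rw [hxy]; abel⟩

noncomputable def Pl (U : Matrix (Fin N) (Fin N) ℂ) :
    EuclideanSpace ℂ (Fin N) →ₗ[ℂ] EuclideanSpace ℂ (Fin N) :=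
  (Ksub U).subtype ∘ₗ (orthogonalProjection (Ksub U)).toLinearMap

noncomputable def Pmat (U : Matrix (Fin N) (Fin N) ℂ) : Matrix (Fin N) (Fin N) ℂ :=
  Matrix.toEuclideanLin.symm (Pl U)

lemma tE_Pmat (U : Matrix (Fin N) (Fin N) ℂ) :
    Matrix.toEuclideanLin (Pmat U) = Pl U := by
  rw [Pmat, LinearEquiv.apply_symm_apply]

lemma Pl_mem (U : Matrix (Fin N) (Fin N) ℂ) (w : EuclideanSpace ℂ (Fin N)) :
    Pl U w ∈ Ksub U := (orthogonalProjection (Ksub U) w).2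

lemma Pl_of_mem {U : Matrix (Fin N) (Fin N) ℂ} {w : EuclideanSpace ℂ (Fin N)}
    (h : w ∈ Ksub U) : Pl U w = w := by
  simpa [Pl] using starProjection_eq_self_iff.mpr h

lemma Pl_of_orth {U : Matrix (Fin N) (Fin N) ℂ} {w : EuclideanSpace ℂ (Fin N)}
    (h : w ∈ (Ksub U)ᗮ) : Pl U w = 0 := by
  simp [Pl, orthogonalProjectionOnto_apply_of_mem_orthogonal h]

lemma matrix_eq_of_tE {M M' : Matrix (Fin N) (Fin N) ℂ}
    (h : ∀ w : EuclideanSpace ℂ (Fin N),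
      Matrix.toEuclideanLin M w = Matrix.toEuclideanLin M' w) : M = M' :=
  Matrix.toEuclideanLin.injective (LinearMap.ext h)

lemma tE_mul (M M' : Matrix (Fin N) (Fin N) ℂ) (w : EuclideanSpace ℂ (Fin N)) :
    Matrix.toEuclideanLin (M * M') w = Matrix.toEuclideanLin M (Matrix.toEuclideanLin M' w) := by
  simp only [Matrix.toEuclideanLin_apply, Equiv.apply_symm_apply, Matrix.mulVec_mulVec]

lemma tE_one (w : EuclideanSpace ℂ (Fin N)) :
    Matrix.toEuclideanLin (1 : Matrix (Fin N) (Fin N) ℂ) w = w := by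
  simp only [Matrix.toEuclideanLin_apply, Matrix.one_mulVec, Equiv.symm_apply_apply]

lemma cInner_of_orth {U : Matrix (Fin N) (Fin N) ℂ} {x : EuclideanSpace ℂ (Fin N)}
    (hx : x ∈ (Ksub U)ᗮ) :
    ∀ v' : Fin N → ℂ, U.mulVec v' = v' → cInner (eqE x) v' = 0 := by
  intro v' hv'
  have hmem : (eqE).symm v' ∈ Ksub U := by
    rw [mem_Ksub, Equiv.apply_symm_apply]; exact hv'
  have h0 : (inner ℂ ((eqE).symm v') x : ℂ) = 0 := hx _ hmem
  rw [← h0]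
  simp only [PiLp.inner_apply, RCLike.inner_apply, WithLp.equiv_symm_apply, cInner,
    WithLp.equiv_apply]

lemma formula {U A : Matrix (Fin N) (Fin N) ℂ} (hU : U ∈ Matrix.unitaryGroup (Fin N) ℂ)
    (hA : IsCayleyBoundaryMatrix U A) :
    A * (U - 1 + Pmat U) = (-Complex.I) • ((U + 1) * (1 - Pmat U)) := by
  apply matrix_eq_of_tE; intro w
  obtain ⟨v, x, hv, hx, rfl⟩ := decomp hU w
  set x₂ := Matrix.toEuclideanLin (U - 1) x with hx₂def
  have hx₂o : x₂ ∈ (Ksub U)ᗮ := range_le_orth hU ⟨x, rfl⟩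
  have hUv : Matrix.toEuclideanLin (U - 1) v = 0 := hv
  have hAv : Matrix.toEuclideanLin A v = 0 := by
    rw [tE_apply', hA.1 _ (mem_Ksub.mp hv)]
    rfl
  have hAx : Matrix.toEuclideanLin A (Matrix.toEuclideanLin (U - 1) x₂)
      = (-Complex.I) • Matrix.toEuclideanLin (U + 1) x₂ := by
    have h2 := hA.2 (eqE x₂) (cInner_of_orth hx₂o)
    rw [tE_apply' (U - 1) x₂, tE_apply',
      Equiv.apply_symm_apply, h2, tE_apply']
    rfl
  have hPv : Matrix.toEuclideanLin (Pmat U) v = v := by rw [tE_Pmat]; exact Pl_of_mem hv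
  have hPx2 : Matrix.toEuclideanLin (Pmat U) x₂ = 0 := by rw [tE_Pmat]; exact Pl_of_orth hx₂o
  have hadd : Matrix.toEuclideanLin (U - 1 + Pmat U)
      = Matrix.toEuclideanLin (U - 1) + Matrix.toEuclideanLin (Pmat U) := map_add _ _ _
  have hsub : Matrix.toEuclideanLin (1 - Pmat U)
      = Matrix.toEuclideanLin (1 : Matrix (Fin N) (Fin N) ℂ) - Matrix.toEuclideanLin (Pmat U) :=
    map_sub _ _ _
  have hsmul : Matrix.toEuclideanLin ((-Complex.I) • ((U + 1) * (1 - Pmat U)))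
      = (-Complex.I) • Matrix.toEuclideanLin ((U + 1) * (1 - Pmat U)) := _root_.map_smul _ _ _
  have hsum : Matrix.toEuclideanLin (U - 1 + Pmat U) (v + x₂)
      = Matrix.toEuclideanLin (U - 1) x₂ + v := by
    rw [hadd]
    simp only [LinearMap.add_apply, map_add, hUv, hPv, hPx2]
    abel
  have hsub2 : Matrix.toEuclideanLin (1 - Pmat U) (v + x₂) = x₂ := by
    rw [hsub]
    simp only [LinearMap.sub_apply, map_add, tE_one, hPv, hPx2]
    abel
  calc Matrix.toEuclideanLin (A * (U - 1 + Pmat U)) (v + x₂)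
      = Matrix.toEuclideanLin A (Matrix.toEuclideanLin (U - 1 + Pmat U) (v + x₂)) := tE_mul _ _ _
    _ = (-Complex.I) • Matrix.toEuclideanLin (U + 1) x₂ := by
        rw [hsum, map_add, hAv, add_zero]
        exact hAx
    _ = Matrix.toEuclideanLin ((-Complex.I) • ((U + 1) * (1 - Pmat U))) (v + x₂) := by
        rw [hsmul, LinearMap.smul_apply, tE_mul, hsub2]

lemma isUnit_det {U : Matrix (Fin N) (Fin N) ℂ} (hU : U ∈ Matrix.unitaryGroup (Fin N) ℂ) :
    IsUnit (U - 1 + Pmat U).det := by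
  rw [isUnit_iff_ne_zero]
  intro hdet
  obtain ⟨v', hv0, hv⟩ := Matrix.exists_mulVec_eq_zero_iff.mpr hdet
  set w : EuclideanSpace ℂ (Fin N) := (eqE).symm v' with hwdef
  have hw : Matrix.toEuclideanLin (U - 1 + Pmat U) w = 0 := by
    rw [hwdef, WithLp.equiv_symm_apply, Matrix.toEuclideanLin_apply_piLp_toLp, hv]
    rfl
  have hsplit : Matrix.toEuclideanLin (U - 1) w + Pl U w = 0 := by
    rw [← tE_Pmat]
    rw [map_add, LinearMap.add_apply] at hw
    exact hw
  have hq : Matrix.toEuclideanLin (U - 1) w ∈ (Ksub U)ᗮ := range_le_orth hU ⟨w, rfl⟩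
  have hp0 : Pl U w = 0 := by
    have hmem : Pl U w ∈ (Ksub U)ᗮ := by
      have : Pl U w = -(Matrix.toEuclideanLin (U - 1) w) := by
        rw [eq_neg_iff_add_eq_zero, add_comm]; exact hsplit
      rw [this]
      exact neg_mem hq
    have := (Submodule.orthogonal_disjoint (Ksub U)).le_bot ⟨Pl_mem U w, hmem⟩
    simpa using this
  have hker : Matrix.toEuclideanLin (U - 1) w = 0 := by
    rw [hp0, add_zero] at hsplit; exact hsplit
  have hwK : w ∈ Ksub U := hker
  have : w = 0 := by rw [← Pl_of_mem hwK, hp0]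
  apply hv0
  have := congrArg (eqE) this
  rw [hwdef, Equiv.apply_symm_apply] at this
  exact this

lemma A_eq {U A : Matrix (Fin N) (Fin N) ℂ} (hU : U ∈ Matrix.unitaryGroup (Fin N) ℂ)
    (hA : IsCayleyBoundaryMatrix U A) :
    A = ((-Complex.I) • ((U + 1) * (1 - Pmat U))) * (U - 1 + Pmat U)⁻¹ := by
  have h := formula hU hA
  have hd := isUnit_det hU
  calc A = A * ((U - 1 + Pmat U) * (U - 1 + Pmat U)⁻¹) := by
        rw [Matrix.mul_nonsing_inv _ hd, Matrix.mul_one]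
    _ = (A * (U - 1 + Pmat U)) * (U - 1 + Pmat U)⁻¹ := by rw [Matrix.mul_assoc]
    _ = _ := by rw [h]

variable {k : ℕ}

noncomputable def projMat (b : Fin k → EuclideanSpace ℂ (Fin N)) : Matrix (Fin N) (Fin N) ℂ :=
  Matrix.of fun a c => ∑ i, (eqE (b i)) a * (starRingEnd ℂ) ((eqE (b i)) c)

lemma tE_projMat (b : Fin k → EuclideanSpace ℂ (Fin N)) (w : EuclideanSpace ℂ (Fin N)) :
    Matrix.toEuclideanLin (projMat b) w = ∑ i, (inner ℂ (b i) w : ℂ) • b i := by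
  rw [tE_apply', Equiv.symm_apply_eq]
  have h1 : (eqE) (∑ i, (inner ℂ (b i) w : ℂ) • b i)
      = ∑ i, (inner ℂ (b i) w : ℂ) • (eqE (b i)) := by
    have : (eqE) (∑ i, (inner ℂ (b i) w : ℂ) • b i)
        = WithLp.linearEquiv 2 ℂ (Fin N → ℂ) (∑ i, (inner ℂ (b i) w : ℂ) • b i) := rfl
    rw [this, map_sum]
    simp only [LinearEquiv.map_smul]
    rfl
  rw [h1]
  funext a
  simp only [Matrix.mulVec, dotProduct, projMat, Matrix.of_apply, Finset.sum_apply,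
    Pi.smul_apply, PiLp.inner_apply, RCLike.inner_apply, WithLp.equiv_apply, smul_eq_mul,
    Finset.sum_mul, Finset.mul_sum]
  rw [Finset.sum_comm]
  refine Finset.sum_congr rfl fun i _ => Finset.sum_congr rfl fun c _ => ?_
  ring

lemma Pmat_eq_projMat {U : Matrix (Fin N) (Fin N) ℂ} {b : Fin k → EuclideanSpace ℂ (Fin N)}
    (hob : Orthonormal ℂ b) (hmem : ∀ i, b i ∈ Ksub U)
    (hsp : Submodule.span ℂ (Set.range b) = Ksub U) :
    Pmat U = projMat b := by
  apply matrix_eq_of_tE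
  intro w
  rw [tE_Pmat, tE_projMat]
  set Q := ∑ i, (inner ℂ (b i) w : ℂ) • b i with hQdef
  have hQmem : Q ∈ Ksub U :=
    Submodule.sum_mem _ fun i _ => Submodule.smul_mem _ _ (hmem i)
  have horth : w - Q ∈ (Ksub U)ᗮ := by
    rw [← hsp, Submodule.mem_orthogonal]
    intro u hu
    induction hu using Submodule.span_induction with
    | mem u hu0 =>
      obtain ⟨j, rfl⟩ := hu0
      rw [inner_sub_right, hQdef, Orthonormal.inner_right_fintype hob, sub_self]
    | zero => exact inner_zero_left _
    | add u1 u2 h1 h2 ih1 ih2 => rw [inner_add_left, ih1, ih2, add_zero]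
    | smul c u1 h1 ih1 => rw [inner_smul_left, ih1, mul_zero]
  exact eq_starProjection_of_mem_orthogonal hQmem horth

lemma continuous_projMat :
    Continuous (fun b : Fin k → EuclideanSpace ℂ (Fin N) => projMat b) := by
  apply continuous_matrix
  intro a c
  simp only [projMat, Matrix.of_apply]
  apply continuous_finset_sum
  intro i _
  have hev : ∀ d : Fin N, Continuous fun b : Fin k → EuclideanSpace ℂ (Fin N) => (eqE (b i)) d :=
    fun d => (continuous_apply d).comp ((PiLp.continuous_ofLp 2 _).comp (continuous_apply i))
  exact (hev a).mul (continuous_star.comp (hev c))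

lemma exists_onb {K : Submodule ℂ (EuclideanSpace ℂ (Fin N))} {k : ℕ}
    (hfr : Module.finrank ℂ K = k) :
    ∃ b : Fin k → EuclideanSpace ℂ (Fin N),
      Orthonormal ℂ b ∧ (∀ i, b i ∈ K) ∧ Submodule.span ℂ (Set.range b) = K := by
  let ob := (stdOrthonormalBasis ℂ K).reindex (finCongr hfr)
  refine ⟨fun i => ((ob i : K) : EuclideanSpace ℂ (Fin N)), ?_, fun i => (ob i).2, ?_⟩
  · have hon := ob.orthonormal
    exact ⟨fun i => hon.1 i, fun i j h => hon.2 h⟩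
  · have h1 : Set.range (fun i => ((ob i : K) : EuclideanSpace ℂ (Fin N)))
        = K.subtype '' (Set.range ob) := by
      rw [← Set.range_comp]; rfl
    rw [h1, Submodule.span_image]
    have h2 : Submodule.span ℂ (Set.range ob) = ⊤ := by
      have := ob.toBasis.span_eq
      rwa [OrthonormalBasis.coe_toBasis] at this
    rw [h2, Submodule.map_top, Submodule.range_subtype]

end CayleyAux

set_option maxHeartbeats 1000000 in
/-- **Continuity of `A(λ)`.**  If `U(λ)` is a continuous function on `(σ, τ)` with unitary
`2n × 2n` values such that `rank (U(λ) − 1)` is constant on `(σ, τ)`, then the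
matrix-function `A(λ) = (1/2π) ∮_Γ ((z+1)/(z−1)) (U(λ) − z)⁻¹ dz` (with `Γ` as above,
encoded via `IsCayleyBoundaryMatrix`) is continuous on `(σ, τ)`. -/
theorem A_continuous_of_rank_const
    (n : ℕ) (σ τ : ℝ)
    (Uf : ℝ → Matrix (Fin (2 * n)) (Fin (2 * n)) ℂ)
    (hUu : ∀ lam ∈ Set.Ioo σ τ, Uf lam ∈ Matrix.unitaryGroup (Fin (2 * n)) ℂ)
    (hUc : ContinuousOn Uf (Set.Ioo σ τ))
    (hrank : ∀ lam₁ ∈ Set.Ioo σ τ, ∀ lam₂ ∈ Set.Ioo σ τ,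
      (Uf lam₁ - 1).rank = (Uf lam₂ - 1).rank)
    (A : ℝ → Matrix (Fin (2 * n)) (Fin (2 * n)) ℂ)
    (hA : ∀ lam ∈ Set.Ioo σ τ, IsCayleyBoundaryMatrix (Uf lam) (A lam)) :
    ContinuousOn A (Set.Ioo σ τ) := by
  classical
  intro lam0 hl0
  have hU0 := hUu lam0 hl0
  have hk : ∀ lam ∈ Set.Ioo σ τ, Module.finrank ℂ (CayleyAux.Ksub (Uf lam))
      = Module.finrank ℂ (CayleyAux.Ksub (Uf lam0)) := by
    intro lam hl
    have h1 := CayleyAux.finrank_Ksub_add_rank (Uf lam)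
    have h2 := CayleyAux.finrank_Ksub_add_rank (Uf lam0)
    have h3 := hrank lam hl lam0 hl0
    omega
  set k := Module.finrank ℂ (CayleyAux.Ksub (Uf lam0)) with hkdef
  have hbas : ∀ lam ∈ Set.Ioo σ τ, ∃ b : Fin k → EuclideanSpace ℂ (Fin (2 * n)),
      Orthonormal ℂ b ∧ (∀ i, b i ∈ CayleyAux.Ksub (Uf lam)) ∧
      Submodule.span ℂ (Set.range b) = CayleyAux.Ksub (Uf lam) :=
    fun lam hl => CayleyAux.exists_onb (hk lam hl)
  have hPcont : Filter.Tendsto (fun lam => CayleyAux.Pmat (Uf lam))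
      (nhdsWithin lam0 (Set.Ioo σ τ)) (nhds (CayleyAux.Pmat (Uf lam0))) := by
    apply Filter.tendsto_of_subseq_tendsto
    intro ns hns
    have hmem : ∀ᶠ j in Filter.atTop, ns j ∈ Set.Ioo σ τ :=
      hns.eventually eventually_mem_nhdsWithin
    set v : ℕ → ℝ := fun j => if ns j ∈ Set.Ioo σ τ then ns j else lam0 with hvdef
    have hvS : ∀ j, v j ∈ Set.Ioo σ τ := by
      intro j
      by_cases h : ns j ∈ Set.Ioo σ τ
      · simp only [hvdef]; rw [if_pos h]; exact h
      · simp only [hvdef]; rw [if_neg h]; exact hl0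
    have hveq : ∀ᶠ j in Filter.atTop, v j = ns j := hmem.mono fun j hj => by
      simp only [hvdef]; rw [if_pos hj]
    have hv0 : Filter.Tendsto v Filter.atTop (nhds lam0) :=
      Filter.Tendsto.congr' (hveq.mono fun j hj => hj.symm) (hns.mono_right nhdsWithin_le_nhds)
    choose b hob hbmem hbsp using fun j => hbas (v j) (hvS j)
    haveI : ProperSpace (Fin k → EuclideanSpace ℂ (Fin (2 * n))) := FiniteDimensional.proper ℂ _
    have hbd : ∀ j, b j ∈ Metric.closedBall (0 : Fin k → EuclideanSpace ℂ (Fin (2 * n))) 1 := by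
      intro j
      rw [Metric.mem_closedBall, dist_zero_right]
      refine (pi_norm_le_iff_of_nonneg zero_le_one).mpr fun i => ?_
      rw [(hob j).1 i]
    obtain ⟨c, -, φ, hφ, hconv⟩ := (isCompact_closedBall
      (0 : Fin k → EuclideanSpace ℂ (Fin (2 * n))) 1).tendsto_subseq hbd
    have hci : ∀ i, Filter.Tendsto (fun j => b (φ j) i) Filter.atTop (nhds (c i)) :=
      fun i => ((continuous_apply i).tendsto _).comp hconv
    have hvφ0 : Filter.Tendsto (fun j => v (φ j)) Filter.atTop
        (nhdsWithin lam0 (Set.Ioo σ τ)) := by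
      apply tendsto_nhdsWithin_of_tendsto_nhds_of_eventually_within
      · exact hv0.comp hφ.tendsto_atTop
      · exact Filter.Eventually.of_forall fun j => hvS (φ j)
    have hUconv : Filter.Tendsto (fun j => Uf (v (φ j))) Filter.atTop (nhds (Uf lam0)) :=
      Filter.Tendsto.comp (hUc lam0 hl0) hvφ0
    have hcon : Orthonormal ℂ c := by
      rw [orthonormal_iff_ite]
      intro i l
      have h1 : Filter.Tendsto (fun j => (inner ℂ (b (φ j) i) (b (φ j) l) : ℂ)) Filter.atTop
          (nhds (inner ℂ (c i) (c l))) := (hci i).inner (hci l)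
      have h2 : ∀ j, (inner ℂ (b (φ j) i) (b (φ j) l) : ℂ) = if i = l then 1 else 0 :=
        fun j => orthonormal_iff_ite.mp (hob (φ j)) i l
      exact tendsto_nhds_unique ((Filter.Tendsto.congr h2) h1) tendsto_const_nhds
    have hx : ∀ i, Filter.Tendsto (fun j => WithLp.equiv 2 (Fin (2 * n) → ℂ) (b (φ j) i))
        Filter.atTop (nhds (WithLp.equiv 2 (Fin (2 * n) → ℂ) (c i))) :=
      fun i => ((PiLp.continuous_ofLp 2 _).tendsto _).comp (hci i)
    have hcmem : ∀ i, c i ∈ CayleyAux.Ksub (Uf lam0) := by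
      intro i
      rw [CayleyAux.mem_Ksub]
      have hcont : Continuous fun p : Matrix (Fin (2 * n)) (Fin (2 * n)) ℂ × (Fin (2 * n) → ℂ) =>
          p.1.mulVec p.2 := continuous_fst.matrix_mulVec continuous_snd
      have hmul : Filter.Tendsto
          (fun j => (Uf (v (φ j))).mulVec (WithLp.equiv 2 (Fin (2 * n) → ℂ) (b (φ j) i)))
          Filter.atTop
          (nhds ((Uf lam0).mulVec (WithLp.equiv 2 (Fin (2 * n) → ℂ) (c i)))) :=
        (hcont.tendsto _).comp (hUconv.prodMk_nhds (hx i))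
      have heq : ∀ j, (Uf (v (φ j))).mulVec (WithLp.equiv 2 (Fin (2 * n) → ℂ) (b (φ j) i))
          = WithLp.equiv 2 (Fin (2 * n) → ℂ) (b (φ j) i) :=
        fun j => CayleyAux.mem_Ksub.mp (hbmem (φ j) i)
      exact tendsto_nhds_unique ((Filter.Tendsto.congr heq) hmul) (hx i)
    have hcsp : Submodule.span ℂ (Set.range c) = CayleyAux.Ksub (Uf lam0) := by
      have hle : Submodule.span ℂ (Set.range c) ≤ CayleyAux.Ksub (Uf lam0) :=
        Submodule.span_le.mpr (by rintro _ ⟨i, rfl⟩; exact hcmem i)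
      have hfr : Module.finrank ℂ (Submodule.span ℂ (Set.range c)) = k := by
        rw [finrank_span_eq_card hcon.linearIndependent, Fintype.card_fin]
      exact Submodule.eq_of_le_of_finrank_le hle (by rw [hfr])
    refine ⟨φ, ?_⟩
    have hPj : ∀ j, CayleyAux.Pmat (Uf (v (φ j))) = CayleyAux.projMat (b (φ j)) :=
      fun j => CayleyAux.Pmat_eq_projMat (hob (φ j)) (hbmem (φ j)) (hbsp (φ j))
    have hP0 : CayleyAux.Pmat (Uf lam0) = CayleyAux.projMat c :=
      CayleyAux.Pmat_eq_projMat hcon hcmem hcsp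
    have h1 : Filter.Tendsto (fun j => CayleyAux.projMat (b (φ j))) Filter.atTop
        (nhds (CayleyAux.projMat c)) := (CayleyAux.continuous_projMat.tendsto _).comp hconv
    have h2 : Filter.Tendsto (fun j => CayleyAux.Pmat (Uf (v (φ j)))) Filter.atTop
        (nhds (CayleyAux.Pmat (Uf lam0))) := by
      rw [hP0]; exact h1.congr fun j => (hPj j).symm
    apply h2.congr'
    filter_upwards [hφ.tendsto_atTop.eventually hmem] with j hj
    simp only [hvdef]
    rw [if_pos hj]
  have hdet0 := CayleyAux.isUnit_det hU0
  have hUcw : Filter.Tendsto Uf (nhdsWithin lam0 (Set.Ioo σ τ)) (nhds (Uf lam0)) := hUc lam0 hl0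
  have hMcont : Filter.Tendsto (fun lam => Uf lam - 1 + CayleyAux.Pmat (Uf lam))
      (nhdsWithin lam0 (Set.Ioo σ τ)) (nhds (Uf lam0 - 1 + CayleyAux.Pmat (Uf lam0))) :=
    (hUcw.sub tendsto_const_nhds).add hPcont
  have hRinv : ContinuousAt Ring.inverse (Uf lam0 - 1 + CayleyAux.Pmat (Uf lam0)).det := by
    have hne : (Uf lam0 - 1 + CayleyAux.Pmat (Uf lam0)).det ≠ 0 := by
      simpa [isUnit_iff_ne_zero] using hdet0
    rw [Ring.inverse_eq_inv']
    exact continuousAt_inv₀ hne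
  have hInv : Filter.Tendsto (fun lam => (Uf lam - 1 + CayleyAux.Pmat (Uf lam))⁻¹)
      (nhdsWithin lam0 (Set.Ioo σ τ))
      (nhds ((Uf lam0 - 1 + CayleyAux.Pmat (Uf lam0))⁻¹)) :=
    ((continuousAt_matrix_inv _ hRinv).tendsto).comp hMcont
  have hC : Filter.Tendsto
      (fun lam => (-Complex.I) • ((Uf lam + 1) * (1 - CayleyAux.Pmat (Uf lam))))
      (nhdsWithin lam0 (Set.Ioo σ τ))
      (nhds ((-Complex.I) • ((Uf lam0 + 1) * (1 - CayleyAux.Pmat (Uf lam0))))) :=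
    ((hUcw.add tendsto_const_nhds).mul (tendsto_const_nhds.sub hPcont)).const_smul _
  have hRHS : ContinuousWithinAt
      (fun lam => ((-Complex.I) • ((Uf lam + 1) * (1 - CayleyAux.Pmat (Uf lam))))
        * (Uf lam - 1 + CayleyAux.Pmat (Uf lam))⁻¹) (Set.Ioo σ τ) lam0 := hC.mul hInv
  apply hRHS.congr
  · intro lam hl
    exact CayleyAux.A_eq (hUu lam hl) (hA lam hl)
  · exact CayleyAux.A_eq hU0 (hA lam0 hl0)
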